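/- Let W be a 4-dimensional real vector space with a neutral metric g and oriented orthonormal basis e_1, e_2, e_3, e_4 (ε_1 = ε_2 = 1, ε_3 = ε_4 = −1), and define S_{ij} and I_1 = S_{12} − S_{34}, I_2 = S_{13} − S_{24}, I_3 = S_{14} + S_{23} as before. Then a complex structure K on W compatible with g induces the orientation of W determined by (e_1, e_2, e_3, e_4) if and only if K = x_1 I_1 + x_2 I_2 + x_3 I_3 with x_1² − x_2² − x_3² = 1; that is, J⁺(W) is the hyperboloid {Σ_{r=1}^{3} x_r I_r : x_1² − x_2² − x_3² = 1}. -/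

import Mathlib

lemma dicho (p q r s t w : ℝ)
    (h00 : q^2 + r^2 - p^2 = -1) (h01 : q*s + r*t = 0) (h02 : r*w - p*s = 0)
    (h03 : q*w + p*t = 0) (h11 : s^2 + t^2 - p^2 = -1) (h12 : t*w + p*q = 0)
    (h13 : s*w - p*r = 0) (h22 : q^2 + s^2 - w^2 = -1) (h23 : s*t + q*r = 0)
    (h33 : r^2 + t^2 - w^2 = -1) :
    p^2 - q^2 - r^2 = 1 ∧ ((w = p ∧ t = -q ∧ s = r) ∨ (w = -p ∧ t = q ∧ s = -r)) := by
  have g11 : (p - w) * (p + w) = 0 := by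
    linear_combination (-1/2)*h00 - (1/2)*h11 + (1/2)*h22 + (1/2)*h33
  have g22 : (q + t) * (q - t) = 0 := by
    linear_combination (1/2)*h00 - (1/2)*h11 + (1/2)*h22 - (1/2)*h33
  have g33 : (r - s) * (r + s) = 0 := by
    linear_combination (1/2)*h00 - (1/2)*h11 - (1/2)*h22 + (1/2)*h33
  have g12 : (p - w) * (q - t) = 0 := by linear_combination h12 - h03
  have g13 : (p - w) * (r + s) = 0 := by linear_combination -h02 - h13
  have g21 : (q + t) * (p + w) = 0 := by linear_combination h03 + h12
  have g23 : (q + t) * (r + s) = 0 := by linear_combination h01 + h23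
  have g31 : (r - s) * (p + w) = 0 := by linear_combination h02 - h13
  have g32 : (r - s) * (q - t) = 0 := by linear_combination h23 - h01
  have gsum : p^2 + w^2 - q^2 - t^2 - r^2 - s^2 = 2 := by
    linear_combination (-1/2)*h00 - (1/2)*h11 - (1/2)*h22 - (1/2)*h33
  have hor : (p - w = 0 ∧ q + t = 0 ∧ r - s = 0) ∨ (p + w = 0 ∧ q - t = 0 ∧ r + s = 0) := by
    by_cases h1 : p - w = 0
    · by_cases h2 : q + t = 0
      · by_cases h3 : r - s = 0
        · exact Or.inl ⟨h1, h2, h3⟩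
        · exact Or.inr ⟨(mul_eq_zero.1 g31).resolve_left h3,
            (mul_eq_zero.1 g32).resolve_left h3, (mul_eq_zero.1 g33).resolve_left h3⟩
      · exact Or.inr ⟨(mul_eq_zero.1 g21).resolve_left h2,
          (mul_eq_zero.1 g22).resolve_left h2, (mul_eq_zero.1 g23).resolve_left h2⟩
    · exact Or.inr ⟨(mul_eq_zero.1 g11).resolve_left h1,
        (mul_eq_zero.1 g12).resolve_left h1, (mul_eq_zero.1 g13).resolve_left h1⟩
  rcases hor with ⟨h1, h2, h3⟩ | ⟨h1, h2, h3⟩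
  · exact ⟨by linear_combination gsum/2 + ((p+w)/2)*h1 - ((q-t)/2)*h2 - ((r+s)/2)*h3,
      Or.inl ⟨by linarith, by linarith, by linarith⟩⟩
  · exact ⟨by linear_combination gsum/2 + ((p-w)/2)*h1 - ((q+t)/2)*h2 - ((r-s)/2)*h3,
      Or.inr ⟨by linarith, by linarith, by linarith⟩⟩

open Matrix in
lemma det4 (A : Matrix (Fin 4) (Fin 4) ℝ) :
    A.det =
      A 0 0 * A 1 1 * A 2 2 * A 3 3 - A 0 0 * A 1 1 * A 2 3 * A 3 2
    - A 0 0 * A 1 2 * A 2 1 * A 3 3 + A 0 0 * A 1 2 * A 2 3 * A 3 1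
    + A 0 0 * A 1 3 * A 2 1 * A 3 2 - A 0 0 * A 1 3 * A 2 2 * A 3 1
    - A 0 1 * A 1 0 * A 2 2 * A 3 3 + A 0 1 * A 1 0 * A 2 3 * A 3 2
    + A 0 1 * A 1 2 * A 2 0 * A 3 3 - A 0 1 * A 1 2 * A 2 3 * A 3 0
    - A 0 1 * A 1 3 * A 2 0 * A 3 2 + A 0 1 * A 1 3 * A 2 2 * A 3 0
    + A 0 2 * A 1 0 * A 2 1 * A 3 3 - A 0 2 * A 1 0 * A 2 3 * A 3 1
    - A 0 2 * A 1 1 * A 2 0 * A 3 3 + A 0 2 * A 1 1 * A 2 3 * A 3 0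
    + A 0 2 * A 1 3 * A 2 0 * A 3 1 - A 0 2 * A 1 3 * A 2 1 * A 3 0
    - A 0 3 * A 1 0 * A 2 1 * A 3 2 + A 0 3 * A 1 0 * A 2 2 * A 3 1
    + A 0 3 * A 1 1 * A 2 0 * A 3 2 - A 0 3 * A 1 1 * A 2 2 * A 3 0
    - A 0 3 * A 1 2 * A 2 0 * A 3 1 + A 0 3 * A 1 2 * A 2 1 * A 3 0 := by
  rw [Matrix.det_succ_row_zero]
  simp [Fin.sum_univ_succ, Matrix.det_fin_three, Matrix.submatrix_apply, Fin.succAbove]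
  ring

set_option maxHeartbeats 4000000 in
set_option maxRecDepth 100000 in
lemma keyPos (a b c u0 u1 u2 u3 v0 v1 v2 v3 : ℝ) (hx : a^2 - b^2 - c^2 = 1)
    (hne : (!![u0, -(a * u1) + b * u2 + c * u3, v0, -(a * v1) + b * v2 + c * v3;
               u1, a * u0 + c * u2 - b * u3, v1, a * v0 + c * v2 - b * v3;
               u2, b * u0 + c * u1 - a * u3, v2, b * v0 + c * v1 - a * v3;
               u3, c * u0 - b * u1 + a * u2, v3, c * v0 - b * v1 + a * v2] :
               Matrix (Fin 4) (Fin 4) ℝ).det ≠ 0) :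
    0 < (!![u0, -(a * u1) + b * u2 + c * u3, v0, -(a * v1) + b * v2 + c * v3;
               u1, a * u0 + c * u2 - b * u3, v1, a * v0 + c * v2 - b * v3;
               u2, b * u0 + c * u1 - a * u3, v2, b * v0 + c * v1 - a * v3;
               u3, c * u0 - b * u1 + a * u2, v3, c * v0 - b * v1 + a * v2] :
               Matrix (Fin 4) (Fin 4) ℝ).det := by
  have hd : (!![u0, -(a * u1) + b * u2 + c * u3, v0, -(a * v1) + b * v2 + c * v3;
               u1, a * u0 + c * u2 - b * u3, v1, a * v0 + c * v2 - b * v3;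
               u2, b * u0 + c * u1 - a * u3, v2, b * v0 + c * v1 - a * v3;
               u3, c * u0 - b * u1 + a * u2, v3, c * v0 - b * v1 + a * v2] :
               Matrix (Fin 4) (Fin 4) ℝ).det =
      c^2*u3^2*v2^2 + -1*c^2*u3^2*v1^2 + (-2)*c^2*u2*u3*v2*v3 + 2*c^2*u2*u3*v0*v1 + c^2*u2^2*v3^2 + -1*c^2*u2^2*v0^2 + 2*c^2*u1*u3*v1*v3 + (-2)*c^2*u1*u3*v0*v2 + -1*c^2*u1^2*v3^2 + c^2*u1^2*v0^2 + (-2)*c^2*u0*u2*v1*v3 + 2*c^2*u0*u2*v0*v2 + 2*c^2*u0*u1*v2*v3 + (-2)*c^2*u0*u1*v0*v1 + -1*c^2*u0^2*v2^2 + c^2*u0^2*v1^2 + (-2)*b*c*u3^2*v0*v1 + (-2)*b*c*u2*u3*v1^2 + 2*b*c*u2*u3*v0^2 + 2*b*c*u2^2*v0*v1 + 2*b*c*u1*u3*v1*v2 + 2*b*c*u1*u3*v0*v3 + 2*b*c*u1*u2*v1*v3 + (-2)*b*c*u1*u2*v0*v2 + (-2)*b*c*u1^2*v2*v3 + 2*b*c*u0*u3*v1*v3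 + (-2)*b*c*u0*u3*v0*v2 + (-2)*b*c*u0*u2*v1*v2 + (-2)*b*c*u0*u2*v0*v3 + (-2)*b*c*u0*u1*v3^2 + 2*b*c*u0*u1*v2^2 + 2*b*c*u0^2*v2*v3 + b^2*u3^2*v2^2 + -1*b^2*u3^2*v0^2 + (-2)*b^2*u2*u3*v2*v3 + (-2)*b^2*u2*u3*v0*v1 + b^2*u2^2*v3^2 + -1*b^2*u2^2*v1^2 + 2*b^2*u1*u2*v1*v2 + 2*b^2*u1*u2*v0*v3 + -1*b^2*u1^2*v2^2 + b^2*u1^2*v0^2 + 2*b^2*u0*u3*v1*v2 + 2*b^2*u0*u3*v0*v3 + (-2)*b^2*u0*u1*v2*v3 + (-2)*b^2*u0*u1*v0*v1 + -1*b^2*u0^2*v3^2 + b^2*u0^2*v1^2 + 2*a*c*u3^2*v0*v2 + 2*a*c*u2*u3*v1*v2 + (-2)*a*c*u2*u3*v0*v3 + (-2)*a*c*u2^2*v1*v3 + (-2)*a*c*u1*u3*v2^2 + (-2)*a*c*u1*u3*v0^2 + 2*a*c*u1*u2*v2*v3 + (-2)*a*c*u1*u2*v0*v1 + 2*a*c*u1^2*v0*v2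 + (-2)*a*c*u0*u3*v2*v3 + 2*a*c*u0*u3*v0*v1 + 2*a*c*u0*u2*v3^2 + 2*a*c*u0*u2*v1^2 + (-2)*a*c*u0*u1*v1*v2 + 2*a*c*u0*u1*v0*v3 + (-2)*a*c*u0^2*v1*v3 + (-2)*a*b*u3^2*v1*v2 + 2*a*b*u2*u3*v1*v3 + 2*a*b*u2*u3*v0*v2 + (-2)*a*b*u2^2*v0*v3 + 2*a*b*u1*u3*v2*v3 + 2*a*b*u1*u3*v0*v1 + (-2)*a*b*u1*u2*v3^2 + (-2)*a*b*u1*u2*v0^2 + (-2)*a*b*u1^2*v0*v3 + (-2)*a*b*u0*u3*v2^2 + (-2)*a*b*u0*u3*v1^2 + 2*a*b*u0*u2*v2*v3 + 2*a*b*u0*u2*v0*v1 + 2*a*b*u0*u1*v1*v3 + 2*a*b*u0*u1*v0*v2 + (-2)*a*b*u0^2*v1*v2 + a^2*u3^2*v1^2 + a^2*u3^2*v0^2 + a^2*u2^2*v1^2 + a^2*u2^2*v0^2 + (-2)*a^2*u1*u3*v1*v3 + (-2)*a^2*u1*u3*v0*v2 + (-2)*a^2*u1*u2*v1*v2 + 2*a^2*u1*u2*v0*v3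 + a^2*u1^2*v3^2 + a^2*u1^2*v2^2 + 2*a^2*u0*u3*v1*v2 + (-2)*a^2*u0*u3*v0*v3 + (-2)*a^2*u0*u2*v1*v3 + (-2)*a^2*u0*u2*v0*v2 + a^2*u0^2*v3^2 + a^2*u0^2*v2^2 := by
    rw [det4]
    simp only [Matrix.cons_val', Matrix.cons_val_zero, Matrix.cons_val_one, Matrix.head_cons,
      Matrix.empty_val', Matrix.cons_val_fin_one, Matrix.head_fin_const,
      Matrix.cons_val_two, Matrix.cons_val_three, Matrix.tail_cons, Matrix.of_apply]
    ring
  rw [hd] at hne ⊢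
  have hid : (1 + c^2) * (c^2*u3^2*v2^2 + -1*c^2*u3^2*v1^2 + (-2)*c^2*u2*u3*v2*v3 + 2*c^2*u2*u3*v0*v1 + c^2*u2^2*v3^2 + -1*c^2*u2^2*v0^2 + 2*c^2*u1*u3*v1*v3 + (-2)*c^2*u1*u3*v0*v2 + -1*c^2*u1^2*v3^2 + c^2*u1^2*v0^2 + (-2)*c^2*u0*u2*v1*v3 + 2*c^2*u0*u2*v0*v2 + 2*c^2*u0*u1*v2*v3 + (-2)*c^2*u0*u1*v0*v1 + -1*c^2*u0^2*v2^2 + c^2*u0^2*v1^2 + (-2)*b*c*u3^2*v0*v1 + (-2)*b*c*u2*u3*v1^2 + 2*b*c*u2*u3*v0^2 + 2*b*c*u2^2*v0*v1 + 2*b*c*u1*u3*v1*v2 + 2*b*c*u1*u3*v0*v3 + 2*b*c*u1*u2*v1*v3 + (-2)*b*c*u1*u2*v0*v2 + (-2)*b*c*u1^2*v2*v3 + 2*b*c*u0*u3*v1*v3 + (-2)*b*c*u0*u3*v0*v2 + (-2)*b*c*u0*u2*v1*v2 + (-2)*b*c*u0*u2*v0*v3 + (-2)*b*c*u0*u1*v3^2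 + 2*b*c*u0*u1*v2^2 + 2*b*c*u0^2*v2*v3 + b^2*u3^2*v2^2 + -1*b^2*u3^2*v0^2 + (-2)*b^2*u2*u3*v2*v3 + (-2)*b^2*u2*u3*v0*v1 + b^2*u2^2*v3^2 + -1*b^2*u2^2*v1^2 + 2*b^2*u1*u2*v1*v2 + 2*b^2*u1*u2*v0*v3 + -1*b^2*u1^2*v2^2 + b^2*u1^2*v0^2 + 2*b^2*u0*u3*v1*v2 + 2*b^2*u0*u3*v0*v3 + (-2)*b^2*u0*u1*v2*v3 + (-2)*b^2*u0*u1*v0*v1 + -1*b^2*u0^2*v3^2 + b^2*u0^2*v1^2 + 2*a*c*u3^2*v0*v2 + 2*a*c*u2*u3*v1*v2 + (-2)*a*c*u2*u3*v0*v3 + (-2)*a*c*u2^2*v1*v3 + (-2)*a*c*u1*u3*v2^2 + (-2)*a*c*u1*u3*v0^2 + 2*a*c*u1*u2*v2*v3 + (-2)*a*c*u1*u2*v0*v1 + 2*a*c*u1^2*v0*v2 + (-2)*a*c*u0*u3*v2*v3 + 2*a*c*u0*u3*v0*v1 + 2*a*c*u0*u2*v3^2 + 2*a*c*u0*u2*v1^2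 + (-2)*a*c*u0*u1*v1*v2 + 2*a*c*u0*u1*v0*v3 + (-2)*a*c*u0^2*v1*v3 + (-2)*a*b*u3^2*v1*v2 + 2*a*b*u2*u3*v1*v3 + 2*a*b*u2*u3*v0*v2 + (-2)*a*b*u2^2*v0*v3 + 2*a*b*u1*u3*v2*v3 + 2*a*b*u1*u3*v0*v1 + (-2)*a*b*u1*u2*v3^2 + (-2)*a*b*u1*u2*v0^2 + (-2)*a*b*u1^2*v0*v3 + (-2)*a*b*u0*u3*v2^2 + (-2)*a*b*u0*u3*v1^2 + 2*a*b*u0*u2*v2*v3 + 2*a*b*u0*u2*v0*v1 + 2*a*b*u0*u1*v1*v3 + 2*a*b*u0*u1*v0*v2 + (-2)*a*b*u0^2*v1*v2 + a^2*u3^2*v1^2 + a^2*u3^2*v0^2 + a^2*u2^2*v1^2 + a^2*u2^2*v0^2 + (-2)*a^2*u1*u3*v1*v3 + (-2)*a^2*u1*u3*v0*v2 + (-2)*a^2*u1*u2*v1*v2 + 2*a^2*u1*u2*v0*v3 + a^2*u1^2*v3^2 + a^2*u1^2*v2^2 + 2*a^2*u0*u3*v1*v2 + (-2)*a^2*u0*u3*v0*v3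 + (-2)*a^2*u0*u2*v1*v3 + (-2)*a^2*u0*u2*v0*v2 + a^2*u0^2*v3^2 + a^2*u0^2*v2^2) =
      (-1*b*u3*v2 + b*u2*v3 + b*u1*v0 + -1*b*u0*v1 + a*u3*v1 + -1*a*u2*v0 + -1*a*u1*v3 + a*u0*v2)^2 + (-1*b*c*u3*v1 + b*c*u2*v0 + b*c*u1*v3 + -1*b*c*u0*v2 + -1*b^2*u3*v0 + -1*b^2*u2*v1 + b^2*u1*v2 + b^2*u0*v3 + a*c*u3*v2 + -1*a*c*u2*v3 + -1*a*c*u1*v0 + a*c*u0*v1 + a^2*u3*v0 + a^2*u2*v1 + -1*a^2*u1*v2 + -1*a^2*u0*v3)^2 := by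
    linear_combination (-1 : ℝ) * (c^2*u3^2*v2^2 + -1*c^2*u3^2*v1^2 + (-2)*c^2*u2*u3*v2*v3 + 2*c^2*u2*u3*v0*v1 + c^2*u2^2*v3^2 + -1*c^2*u2^2*v0^2 + 2*c^2*u1*u3*v1*v3 + (-2)*c^2*u1*u3*v0*v2 + -1*c^2*u1^2*v3^2 + c^2*u1^2*v0^2 + (-2)*c^2*u0*u2*v1*v3 + 2*c^2*u0*u2*v0*v2 + 2*c^2*u0*u1*v2*v3 + (-2)*c^2*u0*u1*v0*v1 + -1*c^2*u0^2*v2^2 + c^2*u0^2*v1^2 + (-2)*b*c*u3^2*v0*v1 + (-2)*b*c*u2*u3*v1^2 + 2*b*c*u2*u3*v0^2 + 2*b*c*u2^2*v0*v1 + 2*b*c*u1*u3*v1*v2 + 2*b*c*u1*u3*v0*v3 + 2*b*c*u1*u2*v1*v3 + (-2)*b*c*u1*u2*v0*v2 + (-2)*b*c*u1^2*v2*v3 + 2*b*c*u0*u3*v1*v3 + (-2)*b*c*u0*u3*v0*v2 + (-2)*b*c*u0*u2*v1*v2 + (-2)*b*c*u0*u2*v0*v3 + (-2)*b*c*u0*u1*v3^2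 + 2*b*c*u0*u1*v2^2 + 2*b*c*u0^2*v2*v3 + -1*b^2*u3^2*v0^2 + (-2)*b^2*u2*u3*v0*v1 + -1*b^2*u2^2*v1^2 + 2*b^2*u1*u3*v0*v2 + 2*b^2*u1*u2*v1*v2 + -1*b^2*u1^2*v2^2 + 2*b^2*u0*u3*v0*v3 + 2*b^2*u0*u2*v1*v3 + (-2)*b^2*u0*u1*v2*v3 + -1*b^2*u0^2*v3^2 + 2*a*c*u3^2*v0*v2 + 2*a*c*u2*u3*v1*v2 + (-2)*a*c*u2*u3*v0*v3 + (-2)*a*c*u2^2*v1*v3 + (-2)*a*c*u1*u3*v2^2 + (-2)*a*c*u1*u3*v0^2 + 2*a*c*u1*u2*v2*v3 + (-2)*a*c*u1*u2*v0*v1 + 2*a*c*u1^2*v0*v2 + (-2)*a*c*u0*u3*v2*v3 + 2*a*c*u0*u3*v0*v1 + 2*a*c*u0*u2*v3^2 + 2*a*c*u0*u2*v1^2 + (-2)*a*c*u0*u1*v1*v2 + 2*a*c*u0*u1*v0*v3 + (-2)*a*c*u0^2*v1*v3 + a^2*u3^2*v0^2 + 2*a^2*u2*u3*v0*v1 + a^2*u2^2*v1^2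 + (-2)*a^2*u1*u3*v0*v2 + (-2)*a^2*u1*u2*v1*v2 + a^2*u1^2*v2^2 + (-2)*a^2*u0*u3*v0*v3 + (-2)*a^2*u0*u2*v1*v3 + 2*a^2*u0*u1*v2*v3 + a^2*u0^2*v3^2) * hx
  rcases hne.lt_or_gt with h | h
  · exfalso
    have h1 : (0:ℝ) < (1 + c^2) := by positivity
    have h2 := mul_pos h1 (neg_pos.2 h)
    have h3 : (0:ℝ) ≤ (-1*b*u3*v2 + b*u2*v3 + b*u1*v0 + -1*b*u0*v1 + a*u3*v1 + -1*a*u2*v0 + -1*a*u1*v3 + a*u0*v2)^2 := sq_nonneg _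
    have h4 : (0:ℝ) ≤ (-1*b*c*u3*v1 + b*c*u2*v0 + b*c*u1*v3 + -1*b*c*u0*v2 + -1*b^2*u3*v0 + -1*b^2*u2*v1 + b^2*u1*v2 + b^2*u0*v3 + a*c*u3*v2 + -1*a*c*u2*v3 + -1*a*c*u1*v0 + a*c*u0*v1 + a^2*u3*v0 + a^2*u2*v1 + -1*a^2*u1*v2 + -1*a^2*u0*v3)^2 := sq_nonneg _
    linarith [hid, h2, h3, h4]
  · exact h


set_option maxRecDepth 40000 in
set_option maxHeartbeats 1000000 in
theorem stmt13 {W : Type*} [AddCommGroup W] [Module ℝ W]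
    (g : W →ₗ[ℝ] W →ₗ[ℝ] ℝ) (hsymm : ∀ v w, g v w = g w v)
    (e : Module.Basis (Fin 4) ℝ W)
    (horth : ∀ i j, i ≠ j → g (e i) (e j) = 0)
    (hnorm : ∀ i : Fin 4, g (e i) (e i) = if (i : ℕ) < 2 then 1 else -1)
    (S : Fin 4 → Fin 4 → (W →ₗ[ℝ] W))
    (hS : ∀ i j k : Fin 4, S i j (e k) = g (e k) (e k) •
      ((if i = k then (1 : ℝ) else 0) • e j - (if k = j then (1 : ℝ) else 0) • e i))
    (I1 I2 I3 : W →ₗ[ℝ] W)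
    (hI1 : I1 = S 0 1 - S 2 3) (hI2 : I2 = S 0 2 - S 1 3) (hI3 : I3 = S 0 3 + S 1 2)
    (K : W →ₗ[ℝ] W) (hK2 : K ∘ₗ K = -LinearMap.id)
    (hskew : ∀ v w, g (K v) w = - g v (K w)) :
    (∀ c : Module.Basis (Fin 4) ℝ W, c 1 = K (c 0) → c 3 = K (c 2) →
      c.orientation = e.orientation)
    ↔ ∃ x : Fin 3 → ℝ, x 0 ^ 2 - x 1 ^ 2 - x 2 ^ 2 = 1 ∧
        K = x 0 • I1 + x 1 • I2 + x 2 • I3 := by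
  classical
  have hg : ∀ i j : Fin 4, g (e i) (e j)
      = if i = j then (if (i : ℕ) < 2 then (1:ℝ) else -1) else 0 := by
    intro i j
    by_cases h : i = j
    · subst h; rw [hnorm i]; simp
    · rw [horth i j h]; simp [h]
  have hv0 : ((0:Fin 4):ℕ) = 0 := rfl
  have hv1 : ((1:Fin 4):ℕ) = 1 := rfl
  have hv2 : ((2:Fin 4):ℕ) = 2 := rfl
  have hv3 : ((3:Fin 4):ℕ) = 3 := rfl
  set A := LinearMap.toMatrix e e K with hAdef
  have hKe : ∀ j i : Fin 4, e.repr (K (e j)) i = A i j :=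
    fun j i => (LinearMap.toMatrix_apply e e K i j).symm
  have hKsum : ∀ j, K (e j) = A 0 j • e 0 + A 1 j • e 1 + A 2 j • e 2 + A 3 j • e 3 := by
    intro j
    have h := e.sum_repr (K (e j))
    rw [Fin.sum_univ_four] at h
    simp only [hKe] at h
    exact h.symm
  have hrK : ∀ (wv : W) (i : Fin 4), e.repr (K wv) i =
      A i 0 * e.repr wv 0 + A i 1 * e.repr wv 1 + A i 2 * e.repr wv 2 + A i 3 * e.repr wv 3 := by
    intro wv i
    conv_lhs => rw [← e.sum_repr wv, Fin.sum_univ_four]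
    simp only [map_add, map_smul, Finsupp.coe_add, Finsupp.coe_smul, Pi.add_apply,
      Pi.smul_apply, smul_eq_mul, hKe]
    ring
  have hA2 : A * A = -1 := by
    rw [hAdef, ← LinearMap.toMatrix_comp e e e K K, hK2, map_neg, LinearMap.toMatrix_id]
  have hE : ∀ i j : Fin 4, A i 0 * A 0 j + A i 1 * A 1 j + A i 2 * A 2 j + A i 3 * A 3 j
      = if i = j then (-1:ℝ) else 0 := by
    intro i j
    have h := Matrix.ext_iff.2 hA2 i j
    rw [Matrix.mul_apply, Fin.sum_univ_four] at h
    rw [h, Matrix.neg_apply, Matrix.one_apply]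
    split <;> simp
  have hsk : ∀ v w' : W, g (K v) w' = - g (K w') v := fun v w' => by
    rw [hskew, hsymm]
  have hgK0 : ∀ j, g (K (e j)) (e 0) = A 0 j := by
    intro j; rw [hKsum j]
    simp [map_add, map_smul, LinearMap.add_apply, LinearMap.smul_apply, smul_eq_mul, hg, hv0, hv1, hv2, hv3, Matrix.vecHead, Matrix.vecTail, Function.comp]
  have hgK1 : ∀ j, g (K (e j)) (e 1) = A 1 j := by
    intro j; rw [hKsum j]
    simp [map_add, map_smul, LinearMap.add_apply, LinearMap.smul_apply, smul_eq_mul, hg, hv0, hv1, hv2, hv3, Matrix.vecHead, Matrix.vecTail, Function.comp]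
  have hgK2 : ∀ j, g (K (e j)) (e 2) = -(A 2 j) := by
    intro j; rw [hKsum j]
    simp [map_add, map_smul, LinearMap.add_apply, LinearMap.smul_apply, smul_eq_mul, hg, hv0, hv1, hv2, hv3, Matrix.vecHead, Matrix.vecTail, Function.comp]
  have hgK3 : ∀ j, g (K (e j)) (e 3) = -(A 3 j) := by
    intro j; rw [hKsum j]
    simp [map_add, map_smul, LinearMap.add_apply, LinearMap.smul_apply, smul_eq_mul, hg, hv0, hv1, hv2, hv3, Matrix.vecHead, Matrix.vecTail, Function.comp]
  have h00a : A 0 0 = 0 := by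
    have h := hsk (e 0) (e 0); rw [hgK0 0] at h; linarith
  have h11a : A 1 1 = 0 := by
    have h := hsk (e 1) (e 1); rw [hgK1 1] at h; linarith
  have h22a : A 2 2 = 0 := by
    have h := hsk (e 2) (e 2); rw [hgK2 2] at h; linarith
  have h33a : A 3 3 = 0 := by
    have h := hsk (e 3) (e 3); rw [hgK3 3] at h; linarith
  have hb01 : A 0 1 = -(A 1 0) := by
    have h := hsk (e 0) (e 1); rw [hgK1 0, hgK0 1] at h; linarith
  have hb02 : A 0 2 = A 2 0 := by
    have h := hsk (e 0) (e 2); rw [hgK2 0, hgK0 2] at h; linarith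
  have hb03 : A 0 3 = A 3 0 := by
    have h := hsk (e 0) (e 3); rw [hgK3 0, hgK0 3] at h; linarith
  have hb12 : A 1 2 = A 2 1 := by
    have h := hsk (e 1) (e 2); rw [hgK2 1, hgK1 2] at h; linarith
  have hb13 : A 1 3 = A 3 1 := by
    have h := hsk (e 1) (e 3); rw [hgK3 1, hgK1 3] at h; linarith
  have hb23 : A 2 3 = -(A 3 2) := by
    have h := hsk (e 2) (e 3); rw [hgK3 2, hgK2 3] at h; linarith
  have T00 := hE 0 0
  have T01 := hE 0 1
  have T02 := hE 0 2
  have T03 := hE 0 3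
  have T11 := hE 1 1
  have T12 := hE 1 2
  have T13 := hE 1 3
  have T22 := hE 2 2
  have T23 := hE 2 3
  have T33 := hE 3 3
  simp only [h00a, h11a, h22a, h33a, hb01, hb02, hb03, hb12, hb13, hb23]
    at T00 T01 T02 T03 T11 T12 T13 T22 T23 T33
  simp only [show ((0:Fin 4) = 0) = True by simp, show ((1:Fin 4) = 1) = True by simp,
    show ((2:Fin 4) = 2) = True by simp, show ((3:Fin 4) = 3) = True by simp,
    show ((0:Fin 4) = 1) = False by simp, show ((0:Fin 4) = 2) = False by simp,
    show ((0:Fin 4) = 3) = False by simp, show ((1:Fin 4) = 2) = False by simp,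
    show ((1:Fin 4) = 3) = False by simp, show ((2:Fin 4) = 3) = False by simp,
    if_true, if_false] at T00 T01 T02 T03 T11 T12 T13 T22 T23 T33
  obtain ⟨hX, hcase⟩ := dicho (A 1 0) (A 2 0) (A 3 0) (A 2 1) (A 3 1) (A 3 2)
    (by linear_combination T00) (by linear_combination T01) (by linear_combination T02)
    (by linear_combination -T03) (by linear_combination T11) (by linear_combination T12)
    (by linear_combination -T13) (by linear_combination T22) (by linear_combination T23)
    (by linear_combination T33)
  constructor
  · intro hL
    rcases hcase with ⟨hw, ht, hs⟩ | ⟨hw, ht, hs⟩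
    · refine ⟨![A 1 0, A 2 0, A 3 0], by simpa using hX, ?_⟩
      have hM1 : LinearMap.toMatrix e e I1
          = !![0,-1,0,0; 1,0,0,0; 0,0,0,-1; 0,0,1,0] := by
        ext i j
        rw [LinearMap.toMatrix_apply, hI1]
        fin_cases i <;> fin_cases j <;>
          simp [hS, hnorm, hv0, hv1, hv2, hv3, Matrix.vecHead, Matrix.vecTail, Function.comp] <;> norm_num
      have hM2 : LinearMap.toMatrix e e I2
          = !![0,0,1,0; 0,0,0,-1; 1,0,0,0; 0,-1,0,0] := by
        ext i j
        rw [LinearMap.toMatrix_apply, hI2]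
        fin_cases i <;> fin_cases j <;>
          simp [hS, hnorm, hv0, hv1, hv2, hv3, Matrix.vecHead, Matrix.vecTail, Function.comp] <;> norm_num
      have hM3 : LinearMap.toMatrix e e I3
          = !![0,0,0,1; 0,0,1,0; 0,1,0,0; 1,0,0,0] := by
        ext i j
        rw [LinearMap.toMatrix_apply, hI3]
        fin_cases i <;> fin_cases j <;>
          simp [hS, hnorm, hv0, hv1, hv2, hv3, Matrix.vecHead, Matrix.vecTail, Function.comp] <;> norm_num
      apply (LinearMap.toMatrix e e).injective
      rw [map_add, map_add, map_smul, map_smul, map_smul, hM1, hM2, hM3, ← hAdef]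
      ext i j
      fin_cases i <;> fin_cases j <;>
        simp [Matrix.vecHead, Matrix.vecTail, Function.comp] <;>
        linarith [h00a, h11a, h22a, h33a, hb01, hb02, hb03, hb12, hb13, hb23, hw, ht, hs]
    · exfalso
      set A' : Matrix (Fin 4) (Fin 4) ℝ :=
        !![1, 0, 0, A 2 0; 0, A 1 0, 0, -(A 3 0); 0, A 2 0, 1, 0; 0, A 3 0, 0, -(A 1 0)]
        with hA'def
      have hdetA' : A'.det = A 3 0 * A 3 0 - A 1 0 * A 1 0 := by
        rw [hA'def, det4]
        simp [Matrix.vecHead, Matrix.vecTail, Function.comp]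
        ring
      have hdneg : A'.det < 0 := by
        rw [hdetA']; nlinarith [hX, sq_nonneg (A 2 0)]
      have hdne : IsUnit (LinearMap.toMatrix e e (Matrix.toLin e e A')).det := by
        rw [LinearMap.toMatrix_toLin]
        exact isUnit_iff_ne_zero.2 (ne_of_lt hdneg)
      set cb := e.map (LinearEquiv.ofIsUnitDet hdne) with hcbdef
      have hcj : ∀ j, cb j = Matrix.toLin e e A' (e j) := by
        intro j
        rw [hcbdef, Module.Basis.map_apply, LinearEquiv.ofIsUnitDet_apply]
      have hcol : ∀ j, cb j = A' 0 j • e 0 + A' 1 j • e 1 + A' 2 j • e 2 + A' 3 j • e 3 := by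
        intro j
        rw [hcj, Matrix.toLin_self, Fin.sum_univ_four]
      have hc0 : cb 0 = e 0 := by
        rw [hcol]; simp [hA'def, Matrix.vecHead, Matrix.vecTail, Function.comp]
      have hc2 : cb 2 = e 2 := by
        rw [hcol]; simp [hA'def, Matrix.vecHead, Matrix.vecTail, Function.comp]
      have hc1 : cb 1 = K (cb 0) := by
        rw [hc0, hcol, hKsum 0, h00a]
        simp [hA'def, Matrix.vecHead, Matrix.vecTail, Function.comp]
      have hc3 : cb 3 = K (cb 2) := by
        rw [hc2, hcol, hKsum 2, hb02, hb12, hs, hw, h22a]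
        simp [hA'def, Matrix.vecHead, Matrix.vecTail, Function.comp]
      have horr := hL cb hc1 hc3
      have hpos : 0 < e.det ⇑cb := (e.orientation_eq_iff_det_pos cb).1 horr.symm
      have hMat : e.toMatrix ⇑cb = A' := by
        ext i j
        rw [Module.Basis.toMatrix_apply, hcj j, ← LinearMap.toMatrix_apply, LinearMap.toMatrix_toLin]
      rw [Module.Basis.det_apply, hMat] at hpos
      linarith
  · rintro ⟨x, hx, hKx⟩ c hc1 hc3
    have hAm : ∀ i j : Fin 4, A i j =
        (!![0, -(x 0), x 1, x 2; x 0, 0, x 2, -(x 1);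
            x 1, x 2, 0, -(x 0); x 2, -(x 1), x 0, 0] : Matrix (Fin 4) (Fin 4) ℝ) i j := by
      intro i j
      rw [← hKe j i, hKx]
      fin_cases i <;> fin_cases j <;>
        simp [hI1, hI2, hI3, hS, hnorm, hv0, hv1, hv2, hv3, Matrix.vecHead, Matrix.vecTail, Function.comp] <;> norm_num
    have hN : e.toMatrix ⇑c =
        (!![e.repr (c 0) 0, -(x 0 * e.repr (c 0) 1) + x 1 * e.repr (c 0) 2 + x 2 * e.repr (c 0) 3, e.repr (c 2) 0, -(x 0 * e.repr (c 2) 1) + x 1 * e.repr (c 2) 2 + x 2 * e.repr (c 2) 3;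
        e.repr (c 0) 1, x 0 * e.repr (c 0) 0 + x 2 * e.repr (c 0) 2 - x 1 * e.repr (c 0) 3, e.repr (c 2) 1, x 0 * e.repr (c 2) 0 + x 2 * e.repr (c 2) 2 - x 1 * e.repr (c 2) 3;
        e.repr (c 0) 2, x 1 * e.repr (c 0) 0 + x 2 * e.repr (c 0) 1 - x 0 * e.repr (c 0) 3, e.repr (c 2) 2, x 1 * e.repr (c 2) 0 + x 2 * e.repr (c 2) 1 - x 0 * e.repr (c 2) 3;
        e.repr (c 0) 3, x 2 * e.repr (c 0) 0 - x 1 * e.repr (c 0) 1 + x 0 * e.repr (c 0) 2, e.repr (c 2) 3, x 2 * e.repr (c 2) 0 - x 1 * e.repr (c 2) 1 + x 0 * e.repr (c 2) 2] : Matrix (Fin 4) (Fin 4) ℝ) := by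
      ext i j
      rw [Module.Basis.toMatrix_apply]
      fin_cases j
      · fin_cases i <;> simp
      · rw [show (⟨1, by norm_num⟩ : Fin 4) = 1 from rfl, hc1, hrK (c 0) i,
          hAm i 0, hAm i 1, hAm i 2, hAm i 3]
        fin_cases i <;> simp <;> ring
      · fin_cases i <;> simp
      · rw [show (⟨3, by norm_num⟩ : Fin 4) = 3 from rfl, hc3, hrK (c 2) i,
          hAm i 0, hAm i 1, hAm i 2, hAm i 3]
        fin_cases i <;> simp <;> ring
    have hne : e.det ⇑c ≠ 0 := (e.isUnit_det c).ne_zero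
    rw [Module.Basis.det_apply, hN] at hne
    have hpos : 0 < e.det ⇑c := by
      rw [Module.Basis.det_apply, hN]
      exact keyPos (x 0) (x 1) (x 2) _ _ _ _ _ _ _ _ hx hne
    exact ((e.orientation_eq_iff_det_pos c).2 hpos).symm
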